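/- Let $\mathrm{k} \in \mathbb{C}$ with $\mathrm{Re}\,\mathrm{k} \neq 0$, $\mathrm{w} = -\mathrm{k}^3$, $A \in \mathbb{C}\setminus\{0\}$, and $B = 4|A|^2/(\mathrm{k}+\bar{\mathrm{k}})^2$. Then $u(t,x) = \frac{A e^{\Theta}}{1 + B e^{\Theta + \bar{\Theta}}}$ with $\Theta = \mathrm{k}x + \mathrm{w}t$ satisfies the Hirota equation $u_t + 24|u|^2 u_x + u_{xxx} = 0$ for all real $t, x$. -/

import Mathlib

open Complex

lemma hasDerivAt_expAff (a p : ℂ) (y : ℝ) :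
    HasDerivAt (fun s : ℝ => Complex.exp (a * s + p)) (a * Complex.exp (a * y + p)) y := by
  have h : HasDerivAt (fun z : ℂ => Complex.exp (a * z + p))
      (Complex.exp (a * (y:ℂ) + p) * a) (y:ℂ) := by
    simpa using (((hasDerivAt_id ((y:ℝ):ℂ)).const_mul a).add_const p).cexp
  simpa [mul_comm] using h.comp_ofReal

lemma hasDerivAt_expAff' (a p : ℂ) (y : ℝ) :
    HasDerivAt (fun s : ℝ => Complex.exp (p + a * s)) (a * Complex.exp (p + a * y)) y := by
  have h : HasDerivAt (fun z : ℂ => Complex.exp (p + a * z))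
      (Complex.exp (p + a * (y:ℂ)) * a) (y:ℂ) := by
    simpa using (((hasDerivAt_id ((y:ℝ):ℂ)).const_mul a).const_add p).cexp
  simpa [mul_comm] using h.comp_ofReal

noncomputable def expA (a : ℂ) (t : ℝ) (y : ℝ) : ℂ := Complex.exp (a * y + (-a^3) * t)

lemma expA_deriv (a : ℂ) (t y : ℝ) :
    HasDerivAt (fun s : ℝ => expA a t s) (a * expA a t y) y :=
  hasDerivAt_expAff a _ y

noncomputable def dd (k c B : ℂ) (t y : ℝ) : ℂ := 1 + B * (expA k t y * expA c t y)

lemma dd_deriv (k c B : ℂ) (t y : ℝ) :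
    HasDerivAt (fun s : ℝ => dd k c B t s)
      (B * (k * expA k t y * expA c t y + expA k t y * (c * expA c t y))) y :=
  (((expA_deriv k t y).mul (expA_deriv c t y)).const_mul B).const_add 1

noncomputable def g0 (k c A B : ℂ) (t y : ℝ) : ℂ :=
  A * expA k t y / dd k c B t y

noncomputable def g1 (k c A B : ℂ) (t y : ℝ) : ℂ :=
  A * expA k t y * (k - B * c * (expA k t y * expA c t y))
    / (dd k c B t y * dd k c B t y)

noncomputable def g2 (k c A B : ℂ) (t y : ℝ) : ℂ :=
  A * expA k t y * (k^2 - B * (expA k t y * expA c t y) * (c^2 + 4*k*c + k^2)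
      + B * (expA k t y * expA c t y) * (B * (expA k t y * expA c t y)) * c^2)
    / (dd k c B t y * (dd k c B t y * dd k c B t y))

noncomputable def g3 (k c A B : ℂ) (t y : ℝ) : ℂ :=
  A * expA k t y * (k^3 - B * (expA k t y * expA c t y) * (c^3 + 6*k*c^2 + 12*k^2*c + 4*k^3)
      + B * (expA k t y * expA c t y) * (B * (expA k t y * expA c t y)) * (4*c^3 + 12*k*c^2 + 6*k^2*c + k^3)
      - B * (expA k t y * expA c t y) * (B * (expA k t y * expA c t y)) * (B * (expA k t y * expA c t y)) * c^3)
    / (dd k c B t y * (dd k c B t y * (dd k c B t y * dd k c B t y)))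

lemma g0_hasDeriv (k c A B : ℂ) (t y : ℝ)
    (hd : dd k c B t y ≠ 0) :
    HasDerivAt (fun s => g0 k c A B t s) (g1 k c A B t y) y := by
  have h := ((expA_deriv k t y).const_mul A).div (dd_deriv k c B t y) hd
  refine h.congr_deriv ?_
  unfold g1 dd
  have hd' : (1:ℂ) + B * (expA k t y * expA c t y) ≠ 0 := hd
  field_simp
  ring

lemma g1_hasDeriv (k c A B : ℂ) (t y : ℝ)
    (hd : dd k c B t y ≠ 0) :
    HasDerivAt (fun s => g1 k c A B t s) (g2 k c A B t y) y := by
  have hW := (expA_deriv k t y).mul (expA_deriv c t y)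
  have hnum := ((expA_deriv k t y).const_mul A).mul
    (((hW.const_mul (B*c))).const_sub k)
  have h := hnum.div ((dd_deriv k c B t y).mul (dd_deriv k c B t y)) (mul_ne_zero hd hd)
  refine h.congr_deriv ?_
  unfold g2 dd
  have hd' : (1:ℂ) + B * (expA k t y * expA c t y) ≠ 0 := hd
  simp only [Pi.mul_apply, Pi.add_apply]
  field_simp
  ring

lemma g2_hasDeriv (k c A B : ℂ) (t y : ℝ)
    (hd : dd k c B t y ≠ 0) :
    HasDerivAt (fun s => g2 k c A B t s) (g3 k c A B t y) y := by
  have hW := (expA_deriv k t y).mul (expA_deriv c t y)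
  have hnum := ((expA_deriv k t y).const_mul A).mul
    ((((hW.const_mul B).mul_const (c^2 + 4*k*c + k^2)).const_sub (k^2)).add
      (((hW.const_mul B).mul (hW.const_mul B)).mul_const (c^2)))
  have hddd := (dd_deriv k c B t y).mul ((dd_deriv k c B t y).mul (dd_deriv k c B t y))
  have h := hnum.div hddd (mul_ne_zero hd (mul_ne_zero hd hd))
  refine h.congr_deriv ?_
  unfold g3 dd
  have hd' : (1:ℂ) + B * (expA k t y * expA c t y) ≠ 0 := hd
  simp only [Pi.mul_apply, Pi.add_apply]
  field_simp
  ring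

lemma g0_iter3 (k c A B : ℂ) (t : ℝ) (hd : ∀ y : ℝ, dd k c B t y ≠ 0) (x : ℝ) :
    iteratedDeriv 3 (fun s => g0 k c A B t s) x = g3 k c A B t x := by
  have e1 : deriv (fun s => g0 k c A B t s) = fun s => g1 k c A B t s :=
    funext fun y => (g0_hasDeriv k c A B t y (hd y)).deriv
  have e2 : deriv (fun s => g1 k c A B t s) = fun s => g2 k c A B t s :=
    funext fun y => (g1_hasDeriv k c A B t y (hd y)).deriv
  have e3 : deriv (fun s => g2 k c A B t s) = fun s => g3 k c A B t s :=
    funext fun y => (g2_hasDeriv k c A B t y (hd y)).deriv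
  rw [show (3:ℕ) = 2+1 from rfl, iteratedDeriv_succ, show (2:ℕ) = 1+1 from rfl,
    iteratedDeriv_succ, iteratedDeriv_one, e1, e2, e3]

lemma final_algebra (k c A Ab B E F : ℂ)
    (hD : (1:ℂ) + B*(E*F) ≠ 0)
    (hrel : 4*(A*Ab) = B*(k+c)^2) :
    (A * (-k^3*E) * (1 + B*(E*F)) - A*E*(B*(-k^3*E*F + E*(-c^3*F)))) / (1 + B*(E*F))^2
    + 24 * (A*E/(1+B*(E*F)) * (Ab*F/(1+B*(E*F))))
        * (A*E*(k - B*c*(E*F)) / ((1+B*(E*F))*(1+B*(E*F))))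
    + A*E*(k^3 - B*(E*F)*(c^3+6*k*c^2+12*k^2*c+4*k^3)
        + B*(E*F)*(B*(E*F))*(4*c^3+12*k*c^2+6*k^2*c+k^3)
        - B*(E*F)*(B*(E*F))*(B*(E*F))*c^3)
      / ((1+B*(E*F))*((1+B*(E*F))*((1+B*(E*F))*(1+B*(E*F))))) = 0 := by
  field_simp [hD]
  refine div_eq_zero_iff.mpr (Or.inl ?_)
  linear_combination (6*A*E^2*F*(k - B*c*(E*F))) * hrel

open Complex in
theorem hirota_one_soliton_bilinear_form
    (k A : ℂ) (hk : k.re ≠ 0) (hA : A ≠ 0)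
    (B : ℂ) (hB : B = 4 * ((‖A‖ : ℝ) : ℂ)^2 / (k + (starRingEnd ℂ) k)^2)
    (u : ℝ → ℝ → ℂ)
    (hu : ∀ t x, u t x =
      A * Complex.exp (k*x + (-k^3)*t)
        / (1 + B * Complex.exp ((k*x + (-k^3)*t) +
            ((starRingEnd ℂ) k * x + (-(starRingEnd ℂ) k^3) * t)))) :
    ∀ t x : ℝ,
      deriv (fun t' => u t' x) t
        + 24 * ((‖u t x‖)^2 : ℝ) * deriv (fun x' => u t x') x
        + iteratedDeriv 3 (fun x' => u t x') x = 0 := by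
  intro t x
  set c : ℂ := (starRingEnd ℂ) k with hc
  set b : ℝ := 4 * (‖A‖)^2 / (2*k.re)^2 with hb_def
  have hb0 : (0:ℝ) ≤ b := by rw [hb_def]; positivity
  have hkc : k + c = ((2*k.re : ℝ) : ℂ) := by rw [hc, Complex.add_conj]
  have hkc0 : k + c ≠ 0 := by
    rw [hkc]
    exact_mod_cast (mul_ne_zero two_ne_zero hk)
  have hBr : B = (b : ℂ) := by
    rw [hB, hkc, hb_def]; push_cast; ring
  have hconj_exp : ∀ y s : ℝ, (starRingEnd ℂ) (k * (y:ℂ) + (-k^3) * (s:ℂ)) = c * y + (-c^3) * s := by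
    intro y s
    rw [map_add, map_mul, map_mul, map_neg, map_pow, Complex.conj_ofReal, Complex.conj_ofReal,
      ← hc]
  have hne : ∀ (z : ℂ), (1:ℂ) + B * (Complex.exp z * Complex.exp ((starRingEnd ℂ) z)) ≠ 0 := by
    intro z
    rw [hBr, Complex.exp_conj, Complex.mul_conj]
    intro h
    have h3 : (1 + b * Complex.normSq (Complex.exp z) : ℝ) = 0 := by
      exact_mod_cast (by push_cast; linear_combination h :
        ((1 + b * Complex.normSq (Complex.exp z) : ℝ) : ℂ) = 0)
    nlinarith [Complex.normSq_nonneg (Complex.exp z), hb0]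
  have hdx : ∀ y : ℝ, dd k c B t y ≠ 0 := by
    intro y
    have h := hne (k * y + (-k^3) * t)
    rw [hconj_exp y t] at h
    exact h
  have hdt : ∀ s : ℝ, (1:ℂ) + B * (Complex.exp (k*x + (-k^3)*s) * Complex.exp (c*x + (-c^3)*s)) ≠ 0 := by
    intro s
    have h := hne (k * x + (-k^3) * s)
    rw [hconj_exp x s] at h
    exact h
  have hux : (fun y : ℝ => u t y) = fun y => g0 k c A B t y := by
    funext y
    rw [hu t y, Complex.exp_add (k * (y:ℂ) + (-k^3) * (t:ℂ)) (c * (y:ℂ) + (-c^3) * (t:ℂ))]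
    rfl
  have hder1 : deriv (fun x' : ℝ => u t x') x = g1 k c A B t x := by
    rw [hux]
    exact (g0_hasDeriv k c A B t x (hdx x)).deriv
  have hder3 : iteratedDeriv 3 (fun x' : ℝ => u t x') x = g3 k c A B t x := by
    rw [hux]
    exact g0_iter3 k c A B t hdx x
  have hut : (fun t' : ℝ => u t' x)
      = fun s : ℝ => A * Complex.exp (k*x + (-k^3)*s)
          / (1 + B * (Complex.exp (k*x + (-k^3)*s) * Complex.exp (c*x + (-c^3)*s))) := by
    funext s
    rw [hu s x, Complex.exp_add (k * (x:ℂ) + (-k^3) * (s:ℂ)) (c * (x:ℂ) + (-c^3) * (s:ℂ))]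
  have hEt := hasDerivAt_expAff' (-k^3) (k*x) t
  have hFt := hasDerivAt_expAff' (-c^3) (c*x) t
  have hdert : deriv (fun t' : ℝ => u t' x) t
      = (A * ((-k^3) * Complex.exp (k*x + (-k^3)*t))
            * (1 + B * (Complex.exp (k*x + (-k^3)*t) * Complex.exp (c*x + (-c^3)*t)))
         - A * Complex.exp (k*x + (-k^3)*t)
            * (B * ((-k^3) * Complex.exp (k*x + (-k^3)*t) * Complex.exp (c*x + (-c^3)*t)
                + Complex.exp (k*x + (-k^3)*t) * ((-c^3) * Complex.exp (c*x + (-c^3)*t)))))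
        / (1 + B * (Complex.exp (k*x + (-k^3)*t) * Complex.exp (c*x + (-c^3)*t)))^2 := by
    rw [hut]
    exact ((hEt.const_mul A).div (((hEt.mul hFt).const_mul B).const_add 1) (hdt t)).deriv
  have huval : u t x = A * Complex.exp (k*x + (-k^3)*t)
      / (1 + B * (Complex.exp (k*x + (-k^3)*t) * Complex.exp (c*x + (-c^3)*t))) := by
    rw [hu t x, Complex.exp_add (k * (x:ℂ) + (-k^3) * (t:ℂ)) (c * (x:ℂ) + (-c^3) * (t:ℂ))]
  have habs : (((‖u t x‖)^2 : ℝ) : ℂ) = u t x * (starRingEnd ℂ) (u t x) := by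
    rw [Complex.mul_conj]; norm_cast; exact Complex.sq_norm _
  have hconjE : (starRingEnd ℂ) (Complex.exp (k*(x:ℂ) + (-k^3)*(t:ℂ)))
      = Complex.exp (c*x + (-c^3)*t) := by
    rw [← Complex.exp_conj, hconj_exp x t]
  have hconjF : (starRingEnd ℂ) (Complex.exp (c*(x:ℂ) + (-c^3)*(t:ℂ)))
      = Complex.exp (k*x + (-k^3)*t) := by
    rw [← Complex.exp_conj, map_add, map_mul, map_mul, map_neg, map_pow,
      Complex.conj_ofReal, Complex.conj_ofReal, hc, Complex.conj_conj]
  have hconjB : (starRingEnd ℂ) B = B := by rw [hBr, Complex.conj_ofReal]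
  have hconju : (starRingEnd ℂ) (u t x)
      = (starRingEnd ℂ) A * Complex.exp (c*x + (-c^3)*t)
          / (1 + B * (Complex.exp (k*x + (-k^3)*t) * Complex.exp (c*x + (-c^3)*t))) := by
    rw [huval, map_div₀, map_mul, hconjE, map_add, map_one, map_mul, hconjB, map_mul,
      hconjE, hconjF]
    ring
  have hAA : ((‖A‖ : ℝ) : ℂ)^2 = A * (starRingEnd ℂ) A := by
    rw [← Complex.ofReal_pow, Complex.sq_norm, Complex.mul_conj]
  have hrel : 4 * (A * (starRingEnd ℂ) A) = B * (k + c)^2 := by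
    rw [hB, hAA]
    field_simp
  have hAbar : (starRingEnd ℂ) A = B * (k + c)^2 / (4 * A) := by
    rw [eq_div_iff (by simp [hA] : (4:ℂ) * A ≠ 0)]
    linear_combination hrel
  have hD : (1:ℂ) + B * (Complex.exp (k*(x:ℂ) + (-k^3)*(t:ℂ)) * Complex.exp (c*x + (-c^3)*t)) ≠ 0 :=
    hdx x
  rw [hder1, hder3, hdert, habs, hconju, huval]
  unfold g1 g3 dd expA
  exact final_algebra k c A ((starRingEnd ℂ) A) B _ _ (hdx x) hrel
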